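/- arXiv:1005.5543 — 4 statements merged into one kernel-verified Lean document; each statement's English description precedes it below -/
import Mathlib

section
/- Let R be a finite relation over attributes I ∪ O satisfying the functional dependency I → O, let V ⊆ I ∪ O be visible attributes, and let x ∈ π_I(R). If y ∈ Out_{x}(V) (y is a possible output for x over Worlds(R, V)), then there exist x' ∈ π_I(R) and y' with y' being the output of x' in R (i.e., some tuple t ∈ R has π_I(t) = x' and π_O(t) = y'), such that π_{V∩I}(x) = π_{V∩I}(x') and π_{V∩O}(y) = π_{V∩O}(y'). -/
/-- Tuples `t` and `t'` agree on the attributes in `S`. -/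
def Agrees {ι Val : Type*} (S : Set ι) (t t' : ι → Val) : Prop := ∀ a ∈ S, t a = t' a

/-- The relation `R` satisfies the functional dependency `I → O`. -/
def SatFD {ι Val : Type*} (I O : Set ι) (R : Set (ι → Val)) : Prop :=
  ∀ t ∈ R, ∀ t' ∈ R, Agrees I t t' → Agrees O t t'

/-- The projections of `R` and `R'` on the attributes `V` coincide. -/
def ProjEq {ι Val : Type*} (V : Set ι) (R R' : Set (ι → Val)) : Prop :=
  (∀ t ∈ R, ∃ t' ∈ R', Agrees V t t') ∧ (∀ t' ∈ R', ∃ t ∈ R, Agrees V t t')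

/-- Possible worlds of `R` w.r.t. visible attributes `V`. -/
def Worlds {ι Val : Type*} (I O V : Set ι) (R : Set (ι → Val)) : Set (Set (ι → Val)) :=
  {R' | SatFD I O R' ∧ ProjEq V R R'}

/-- Possible outputs of input tuple `x` over the possible worlds of `R` w.r.t. `V`. -/
def Out {ι Val : Type*} (I O V : Set ι) (R : Set (ι → Val)) (x : ι → Val) : Set (ι → Val) :=
  {y | ∃ R' ∈ Worlds I O V R, ∃ t' ∈ R', Agrees I t' x ∧ Agrees O t' y}

/-- If `y ∈ Out_x(V)` then there exist a real input `x'` of `R` with real output `y'`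
such that `x` and `x'` agree on `V ∩ I`, and `y` and `y'` agree on `V ∩ O`. -/
theorem stmt_4 {ι Val : Type*} [Finite ι] [Finite Val]
    (I O V : Set ι) (R : Set (ι → Val)) (hRfin : R.Finite)
    (hdisj : I ∩ O = ∅) (hFD : SatFD I O R)
    (x y : ι → Val) (hx : ∃ t ∈ R, Agrees I t x) (hy : y ∈ Out I O V R x) :
    ∃ x' y' : ι → Val, (∃ t ∈ R, Agrees I t x' ∧ Agrees O t y') ∧
      Agrees (V ∩ I) x x' ∧ Agrees (V ∩ O) y y' := by
  obtain ⟨R', ⟨hFD', hPE⟩, t', ht'R', hI, hO⟩ := hy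
  obtain ⟨t, htR, hV⟩ := hPE.2 t' ht'R'
  exact ⟨t, t, ⟨t, htR, fun a _ => rfl, fun a _ => rfl⟩,
    fun a ha => ((hI a ha.2).symm.trans (hV a ha.1).symm),
    fun a ha => ((hO a ha.2).symm.trans (hV a ha.1).symm)⟩
end

section
/- Consider a chain workflow of two bijective modules m1, m2 on k boolean inputs/outputs, where m1 is a bijection from {0,1}^k to {0,1}^k. Fix a set V1 of visible output attributes of m1 with |complement of V1| = log2(Γ), Γ a power of 2 with 2 ≤ Γ ≤ 2^k. The number of standalone possible worlds of m1 (all functions from {0,1}^k to {0,1}^k agreeing with m1 on the visible bits) is Γ^(2^k), while the number of such functions that are additionally bijections is (Γ!)^(2^k / Γ). -/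
/-- Split a boolean vector indexed by `Fin k` into its `V1`-part and `V1ᶜ`-part. -/
def splitEquiv (k : ℕ) (V1 : Finset (Fin k)) :
    (Fin k → Bool) ≃ ((↥V1 → Bool) × (↥(V1ᶜ) → Bool)) where
  toFun y := (fun i => y i, fun i => y i)
  invFun p i := if h : i ∈ V1 then p.1 ⟨i, h⟩ else p.2 ⟨i, Finset.mem_compl.2 h⟩
  left_inv y := by
    funext i
    by_cases h : i ∈ V1 <;> simp [h]
  right_inv p := by
    obtain ⟨a, b⟩ := p
    refine Prod.ext ?_ ?_
    · funext i
      simp [i.2]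
    · funext i
      have h : ¬ (i : Fin k) ∈ V1 := Finset.mem_compl.1 i.2
      simp [h]

/-- Counting possible worlds for a bijective standalone module `m1` on `k` boolean
inputs/outputs, with visible output attributes `V1` and `|V1ᶜ| = log2 Γ` (`Γ = 2^c`,
`c ≥ 1`): the number of standalone possible worlds (functions agreeing with `m1` on
visible output bits) is `Γ^(2^k)`, while the number of bijective such worlds is
`(Γ!)^(2^k / Γ)`. -/
theorem stmt_8 (k c Γ : ℕ) (hc : 1 ≤ c) (hΓ : Γ = 2 ^ c)
    (V1 : Finset (Fin k)) (hV1 : V1ᶜ.card = c)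
    (m1 : (Fin k → Bool) → (Fin k → Bool)) (hm1 : Function.Bijective m1) :
    Nat.card {f : (Fin k → Bool) → (Fin k → Bool) //
        ∀ x, ∀ i ∈ V1, f x i = m1 x i} = Γ ^ (2 ^ k) ∧
    Nat.card {f : (Fin k → Bool) → (Fin k → Bool) //
        (∀ x, ∀ i ∈ V1, f x i = m1 x i) ∧ Function.Bijective f} =
      (Nat.factorial Γ) ^ (2 ^ k / Γ) := by
  classical
  have hck : c ≤ k := by
    have h2 : V1ᶜ.card ≤ Fintype.card (Fin k) := Finset.card_le_univ _
    simpa [Fintype.card_fin, hV1] using h2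
  have hVcard : V1.card = k - c := by
    have h1 : V1ᶜ.card = Fintype.card (Fin k) - V1.card := Finset.card_compl V1
    have h2 : V1.card ≤ Fintype.card (Fin k) := Finset.card_le_univ V1
    simp only [Fintype.card_fin, hV1] at h1 h2
    omega
  set d := splitEquiv k V1 with hd
  set e := Equiv.ofBijective m1 hm1 with he
  have hdsymm : ∀ (p : (↥V1 → Bool) × (↥(V1ᶜ) → Bool)) (i : Fin k) (hi : i ∈ V1),
      d.symm p i = p.1 ⟨i, hi⟩ := by
    intro p i hi
    simp [hd, splitEquiv, hi]
  constructor
  · -- standalone possible worlds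
    have Φbij : Function.Bijective
        (fun (g : (Fin k → Bool) → (↥(V1ᶜ) → Bool)) =>
          (⟨fun x => d.symm ((d (m1 x)).1, g x), by
            intro x i hi
            exact hdsymm ((d (m1 x)).1, g x) i hi⟩ :
            {f : (Fin k → Bool) → (Fin k → Bool) // ∀ x, ∀ i ∈ V1, f x i = m1 x i})) := by
      constructor
      · intro g g' h
        funext x
        have := congrArg (fun f : {f : (Fin k → Bool) → (Fin k → Bool) //
            ∀ x, ∀ i ∈ V1, f x i = m1 x i} => (d (f.1 x)).2) h
        simpa using this
      · rintro ⟨f, hf⟩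
        refine ⟨fun x => (d (f x)).2, ?_⟩
        refine Subtype.ext (funext fun x => ?_)
        have hfst : (d (f x)).1 = (d (m1 x)).1 := funext fun i => hf x i i.2
        show d.symm ((d (m1 x)).1, (d (f x)).2) = f x
        rw [← hfst, Prod.mk.eta, Equiv.symm_apply_apply]
    rw [← Nat.card_congr (Equiv.ofBijective _ Φbij)]
    simp only [Nat.card_eq_fintype_card, Fintype.card_fun, Fintype.card_bool,
      Fintype.card_coe, Fintype.card_fin, hV1, hΓ]
  · -- bijective possible worlds
    have Φbij : Function.Bijective
        (fun (τ : (↥V1 → Bool) → Equiv.Perm (↥(V1ᶜ) → Bool)) =>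
          (⟨fun x => d.symm ((d (m1 x)).1, τ (d (m1 x)).1 (d (m1 x)).2), by
            refine ⟨?_, ?_⟩
            · intro x i hi
              exact hdsymm ((d (m1 x)).1, τ (d (m1 x)).1 (d (m1 x)).2) i hi
            · have hfun : (fun x => d.symm ((d (m1 x)).1, τ (d (m1 x)).1 (d (m1 x)).2)) =
                  ⇑(e.trans (d.trans ((Equiv.prodShear (Equiv.refl (↥V1 → Bool)) τ).trans
                    d.symm))) := by
                funext x
                rfl
              rw [hfun]
              exact Equiv.bijective _⟩ :
            {f : (Fin k → Bool) → (Fin k → Bool) //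
              (∀ x, ∀ i ∈ V1, f x i = m1 x i) ∧ Function.Bijective f})) := by
      constructor
      · intro τ τ' h
        funext a
        refine Equiv.ext fun b => ?_
        have hx := congrArg (fun f : {f : (Fin k → Bool) → (Fin k → Bool) //
            (∀ x, ∀ i ∈ V1, f x i = m1 x i) ∧ Function.Bijective f} =>
            f.1 (e.symm (d.symm (a, b)))) h
        simp only at hx
        have hme : m1 (e.symm (d.symm (a, b))) = d.symm (a, b) :=
          e.apply_symm_apply (d.symm (a, b))
        rw [hme, Equiv.apply_symm_apply] at hx
        have := congrArg (fun z => (d z).2) hx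
        simpa using this
      · rintro ⟨f, hf, hfbij⟩
        set σ : ((↥V1 → Bool) × (↥(V1ᶜ) → Bool)) → ((↥V1 → Bool) × (↥(V1ᶜ) → Bool)) :=
          fun p => d (f (e.symm (d.symm p))) with hσdef
        have hσ : Function.Bijective σ :=
          d.bijective.comp (hfbij.comp (e.symm.bijective.comp d.symm.bijective))
        have hfst : ∀ p, (σ p).1 = p.1 := by
          intro p
          have h1 : (d (f (e.symm (d.symm p)))).1 = (d (m1 (e.symm (d.symm p)))).1 :=
            funext fun i => hf (e.symm (d.symm p)) i i.2
          have h2 : m1 (e.symm (d.symm p)) = d.symm p := e.apply_symm_apply (d.symm p)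
          rw [hσdef]
          simp only [h1, h2, Equiv.apply_symm_apply]
        have τinj : ∀ a, Function.Injective (fun b => (σ (a, b)).2) := by
          intro a b b' hbb
          have hpq : σ (a, b) = σ (a, b') := by
            refine Prod.ext ?_ hbb
            rw [hfst, hfst]
          have := hσ.1 hpq
          exact congrArg Prod.snd this
        have τsurj : ∀ a, Function.Surjective (fun b => (σ (a, b)).2) := by
          intro a b'
          obtain ⟨p, hp⟩ := hσ.2 (a, b')
          have h1 : p.1 = a := by
            have := hfst p
            rw [hp] at this
            exact this.symm
          refine ⟨p.2, ?_⟩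
          simp only
          rw [← h1, Prod.mk.eta, hp]
        refine ⟨fun a => Equiv.ofBijective _ ⟨τinj a, τsurj a⟩, ?_⟩
        refine Subtype.ext (funext fun x => ?_)
        show d.symm ((d (m1 x)).1, (σ ((d (m1 x)).1, (d (m1 x)).2)).2) = f x
        have h1 : σ ((d (m1 x)).1, (d (m1 x)).2) = d (f x) := by
          rw [Prod.mk.eta, hσdef]
          simp only
          rw [Equiv.symm_apply_apply]
          have : e.symm (m1 x) = x := e.symm_apply_apply x
          rw [show m1 x = e x from rfl, Equiv.symm_apply_apply]
        have h2 : (d (m1 x)).1 = (d (f x)).1 := by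
          have := hfst ((d (m1 x)).1, (d (m1 x)).2)
          rw [h1] at this
          simpa using this.symm
        rw [h1, h2, Prod.mk.eta, Equiv.symm_apply_apply]
    rw [← Nat.card_congr (Equiv.ofBijective _ Φbij)]
    have hdiv : 2 ^ k / Γ = 2 ^ (k - c) := by
      rw [hΓ, Nat.pow_div hck (by norm_num)]
    rw [hdiv]
    simp only [Nat.card_eq_fintype_card, Fintype.card_fun, Fintype.card_perm,
      Fintype.card_bool, Fintype.card_coe, hV1, hVcard, hΓ]
end

section
/- Greedy analysis for bounded data sharing: Let there be n modules, each module i having a finite nonempty list L_i of candidate subsets of a ground set A with costs c : A → ℝ≥0, and suppose each element of A appears in the candidate subsets of at most γ+1 distinct modules (each data item is input to at most γ modules and output of at most 1). Let OPT be a set S ⊆ A such that for each i some member of L_i is contained in S, minimizing c(S). Then the greedy solution T = ⋃_i B_i, where B_i is a minimum-cost member of L_i, satisfies c(T) ≤ (γ+1) · c(OPT). -/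
open scoped Classical

lemma sum_biUnion_le_aux {A ι : Type*} [DecidableEq A] (c : A → ℝ) (hc : ∀ a, 0 ≤ c a)
    (B : ι → Finset A) (s : Finset ι) :
    ∑ a ∈ s.biUnion B, c a ≤ ∑ i ∈ s, ∑ a ∈ B i, c a := by
  classical
  induction s using Finset.induction_on with
  | empty => simp
  | @insert i s hi ih =>
    rw [Finset.biUnion_insert, Finset.sum_insert hi]
    calc ∑ a ∈ B i ∪ s.biUnion B, c a
        ≤ ∑ a ∈ B i, c a + ∑ a ∈ s.biUnion B, c a := by
          have := Finset.sum_union_inter (s₁ := B i) (s₂ := s.biUnion B) (f := c)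
          have h0 : 0 ≤ ∑ a ∈ B i ∩ s.biUnion B, c a :=
            Finset.sum_nonneg fun a _ => hc a
          linarith
      _ ≤ ∑ a ∈ B i, c a + ∑ i ∈ s, ∑ a ∈ B i, c a := by linarith

/-- Greedy analysis for bounded data sharing: if each element of the ground set appears in
the candidate subsets of at most γ+1 modules, `OPT` is any feasible solution, and `B i` is
a minimum-cost member of each list `L i`, then the greedy solution `T = ⋃ i, B i` has
cost at most `(γ+1)` times the cost of `OPT`. -/
theorem stmt_11 {A : Type*} [Fintype A] [DecidableEq A] (n γ : ℕ)
    (c : A → ℝ) (hc : ∀ a, 0 ≤ c a)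
    (L : Fin n → Finset (Finset A)) (hL : ∀ i, (L i).Nonempty)
    (hshare : ∀ a : A,
      (Finset.univ.filter (fun i : Fin n => ∃ S ∈ L i, a ∈ S)).card ≤ γ + 1)
    (OPT : Finset A) (hOPT : ∀ i, ∃ S ∈ L i, S ⊆ OPT)
    (B : Fin n → Finset A) (hB : ∀ i, B i ∈ L i)
    (hBmin : ∀ i, ∀ S ∈ L i, ∑ a ∈ B i, c a ≤ ∑ a ∈ S, c a) :
    ∑ a ∈ Finset.univ.biUnion B, c a ≤ ((γ : ℝ) + 1) * ∑ a ∈ OPT, c a := by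
  choose S hSL hSsub using hOPT
  calc ∑ a ∈ Finset.univ.biUnion B, c a
      ≤ ∑ i : Fin n, ∑ a ∈ B i, c a := sum_biUnion_le_aux c hc B _
    _ ≤ ∑ i : Fin n, ∑ a ∈ S i, c a :=
        Finset.sum_le_sum fun i _ => hBmin i (S i) (hSL i)
    _ = ∑ i : Fin n, ∑ a ∈ OPT, if a ∈ S i then c a else 0 := by
        refine Finset.sum_congr rfl fun i _ => ?_
        rw [Finset.sum_ite_mem, Finset.inter_eq_right.mpr (hSsub i)]
    _ = ∑ a ∈ OPT, ((Finset.univ.filter (fun i : Fin n => a ∈ S i)).card : ℝ) * c a := by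
        rw [Finset.sum_comm]
        refine Finset.sum_congr rfl fun a _ => ?_
        rw [← Finset.sum_filter, Finset.sum_const, nsmul_eq_mul]
    _ ≤ ∑ a ∈ OPT, ((γ : ℝ) + 1) * c a := by
        refine Finset.sum_le_sum fun a _ => ?_
        apply mul_le_mul_of_nonneg_right _ (hc a)
        have hsub : Finset.univ.filter (fun i : Fin n => a ∈ S i) ⊆
            Finset.univ.filter (fun i : Fin n => ∃ T ∈ L i, a ∈ T) := by
          intro i hi
          simp only [Finset.mem_filter] at hi ⊢
          exact ⟨hi.1, S i, hSL i, hi.2⟩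
        have := (Finset.card_le_card hsub).trans (hshare a)
        exact_mod_cast this
    _ = ((γ : ℝ) + 1) * ∑ a ∈ OPT, c a := by rw [Finset.mul_sum]
end

section
/- LP rounding for set constraints: Suppose nonnegative reals x_b (b ∈ A) and r_{ij} (i ∈ [1,n], j ∈ [1,ℓ_i]) satisfy Σ_{j=1}^{ℓ_i} r_{ij} ≥ 1 for each i, and x_b ≥ r_{ij} for all b in the j-th candidate subset S_{ij} ⊆ A of module i. Let ℓ_max = max_i ℓ_i and define V̄ = { b ∈ A : x_b ≥ 1/ℓ_max }. Then (a) for each i there exists j with S_{ij} ⊆ V̄, and (b) Σ_{b∈V̄} c_b ≤ ℓ_max · Σ_{b∈A} c_b x_b for any nonnegative costs c. -/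
open scoped Classical

/-- LP rounding for set constraints: given a feasible fractional solution
(`∑ j r i j ≥ 1` and `x b ≥ r i j` for `b ∈ S i j`), the rounded set
`V̄ = {b : x b ≥ 1/ℓmax}` contains some candidate subset of every module, and its
cost is at most `ℓmax` times the fractional cost. -/
theorem stmt_12 {A : Type*} [Fintype A] (n lmax : ℕ)
    (ℓ : Fin n → ℕ) (hℓ : ∀ i, ℓ i ≤ lmax) (hlmax : 0 < lmax)
    (S : (i : Fin n) → Fin (ℓ i) → Finset A)
    (x : A → ℝ) (hx : ∀ b, 0 ≤ x b)
    (r : (i : Fin n) → Fin (ℓ i) → ℝ) (hr : ∀ i j, 0 ≤ r i j)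
    (hcov : ∀ i, 1 ≤ ∑ j, r i j)
    (hxr : ∀ i j, ∀ b ∈ S i j, r i j ≤ x b)
    (c : A → ℝ) (hcnn : ∀ b, 0 ≤ c b) :
    (∀ i, ∃ j, S i j ⊆ Finset.univ.filter (fun b => (1 : ℝ) / lmax ≤ x b)) ∧
    ∑ b ∈ Finset.univ.filter (fun b => (1 : ℝ) / lmax ≤ x b), c b ≤
      (lmax : ℝ) * ∑ b, c b * x b := by
  constructor
  · intro i
    have hne : (Finset.univ : Finset (Fin (ℓ i))).Nonempty := by
      by_contra h
      rw [Finset.not_nonempty_iff_eq_empty] at h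
      have := hcov i
      rw [h] at this
      norm_num at this
    have hpos : 0 < (ℓ i : ℝ) := by
      have : 0 < ℓ i := Fin.pos_iff_nonempty.mpr ⟨hne.choose⟩
      exact_mod_cast this
    have hsum : ∑ _j : Fin (ℓ i), (1 / (ℓ i : ℝ)) ≤ ∑ j, r i j := by
      rw [Finset.sum_const, Finset.card_univ, Fintype.card_fin, nsmul_eq_mul,
        mul_one_div, div_self (ne_of_gt hpos)]
      exact hcov i
    obtain ⟨j, -, hj⟩ := Finset.exists_le_of_sum_le hne hsum
    refine ⟨j, fun b hb => ?_⟩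
    simp only [Finset.mem_filter, Finset.mem_univ, true_and]
    calc (1 : ℝ) / lmax ≤ 1 / (ℓ i : ℝ) := by
          apply one_div_le_one_div_of_le hpos
          exact_mod_cast hℓ i
      _ ≤ r i j := hj
      _ ≤ x b := hxr i j b hb
  · have h1 : ∑ b ∈ Finset.univ.filter (fun b => (1 : ℝ) / lmax ≤ x b), c b ≤
        ∑ b ∈ Finset.univ.filter (fun b => (1 : ℝ) / lmax ≤ x b),
          (lmax : ℝ) * (c b * x b) := by
      apply Finset.sum_le_sum
      intro b hb
      simp only [Finset.mem_filter] at hb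
      have hlm : (0 : ℝ) < lmax := by exact_mod_cast hlmax
      have : 1 ≤ (lmax : ℝ) * x b := by
        rw [div_le_iff₀ hlm] at hb
        linarith [hb.2]
      calc c b = c b * 1 := (mul_one _).symm
        _ ≤ c b * ((lmax : ℝ) * x b) := by
            exact mul_le_mul_of_nonneg_left this (hcnn b)
        _ = (lmax : ℝ) * (c b * x b) := by ring
    refine h1.trans ?_
    rw [← Finset.mul_sum]
    apply mul_le_mul_of_nonneg_left _ (by positivity)
    apply Finset.sum_le_sum_of_subset_of_nonneg (Finset.filter_subset _ _)
    intro b _ _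
    exact mul_nonneg (hcnn b) (hx b)
end
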